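/- For any a, b, c, m > 0, the function (θ,ψ) ↦ (3m³/50)·sin⁴θ cos θ sin ψ cos ψ · (a² − b²)(b² − c²)(c² − a²) · G(θ,ψ) / z(θ,ψ)⁴ vanishes identically on (0,π) × (0,2π) if and only if a = b or b = c or a = c. -/

import Mathlib

open Real

/-- The function `G(θ,ψ)` appearing in the measure obstruction for the tri-axial
rolling ellipsoid. -/
noncomputable def Gfun (a b c θ ψ : ℝ) : ℝ :=
  (2 * a ^ 2 * b ^ 2 + 3 * a ^ 2 * c ^ 2 + 3 * b ^ 2 * c ^ 2) +
    (b ^ 2 - a ^ 2) * c ^ 2 * (1 - cos (2 * θ)) * cos (2 * ψ) +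
    (-2 * a ^ 2 * b ^ 2 + a ^ 2 * c ^ 2 + b ^ 2 * c ^ 2) * cos (2 * θ)

/-- Height of the center of the ellipsoid above the plane. -/
noncomputable def zHeight (a b c θ ψ : ℝ) : ℝ :=
  Real.sqrt (a ^ 2 * sin θ ^ 2 * sin ψ ^ 2 + b ^ 2 * sin θ ^ 2 * cos ψ ^ 2 +
    c ^ 2 * cos θ ^ 2)

lemma eq_of_sq_eq_pos {a b : ℝ} (ha : 0 < a) (hb : 0 < b) (h : a ^ 2 = b ^ 2) : a = b := by
  have h2 : (a - b) * (a + b) = 0 := by nlinarith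
  rcases mul_eq_zero.mp h2 with h3 | h3 <;> linarith

/-- The measure obstruction
`(3m³/50)·sin⁴θ cosθ sinψ cosψ·(a²−b²)(b²−c²)(c²−a²)·G(θ,ψ)/z(θ,ψ)⁴`
vanishes identically on `(0,π) × (0,2π)` if and only if at least two of the
semi-axes of the ellipsoid are equal. -/
theorem measure_obstruction_vanishes_iff (a b c m : ℝ) (ha : 0 < a) (hb : 0 < b)
    (hc : 0 < c) (hm : 0 < m) :
    (∀ θ ∈ Set.Ioo 0 π, ∀ ψ ∈ Set.Ioo 0 (2 * π),
        (3 * m ^ 3 / 50) * sin θ ^ 4 * cos θ * sin ψ * cos ψ *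
          ((a ^ 2 - b ^ 2) * (b ^ 2 - c ^ 2) * (c ^ 2 - a ^ 2)) * Gfun a b c θ ψ /
          zHeight a b c θ ψ ^ 4 = 0) ↔
      (a = b ∨ b = c ∨ a = c) := by
  constructor
  · intro h
    have hmem1 : (π/4 : ℝ) ∈ Set.Ioo 0 π := by
      constructor <;> nlinarith [pi_pos]
    have hmem2 : (π/4 : ℝ) ∈ Set.Ioo 0 (2*π) := by
      constructor <;> nlinarith [pi_pos]
    have key := h (π/4) hmem1 (π/4) hmem2
    have hs : sin (π/4) = Real.sqrt 2 / 2 := Real.sin_pi_div_four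
    have hcθ : cos (π/4) = Real.sqrt 2 / 2 := Real.cos_pi_div_four
    have hc2 : cos (2 * (π/4)) = 0 := by
      norm_num [show (2:ℝ) * (π/4) = π/2 by ring]
    have hG : Gfun a b c (π/4) (π/4) =
        2 * a ^ 2 * b ^ 2 + 3 * a ^ 2 * c ^ 2 + 3 * b ^ 2 * c ^ 2 := by
      simp [Gfun, hc2]
    have hGpos : (0:ℝ) < 2 * a ^ 2 * b ^ 2 + 3 * a ^ 2 * c ^ 2 + 3 * b ^ 2 * c ^ 2 := by
      positivity
    have hsqrt2 : (Real.sqrt 2) ^ 2 = 2 := Real.sq_sqrt (by norm_num)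
    have hzarg : a ^ 2 * sin (π/4) ^ 2 * sin (π/4) ^ 2 + b ^ 2 * sin (π/4) ^ 2 * cos (π/4) ^ 2 +
        c ^ 2 * cos (π/4) ^ 2 = a^2/4 + b^2/4 + c^2/2 := by
      rw [hs, hcθ]; field_simp; rw [hsqrt2]; ring
    have hzpos : 0 < zHeight a b c (π/4) (π/4) := by
      rw [zHeight, hzarg]
      apply Real.sqrt_pos.mpr; positivity
    rw [hG, hs, hcθ, div_eq_zero_iff] at key
    rcases key with key | key
    · have hspos : (0:ℝ) < Real.sqrt 2 / 2 := by positivity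
      have hfac : (a ^ 2 - b ^ 2) * (b ^ 2 - c ^ 2) * (c ^ 2 - a ^ 2) = 0 := by
        by_contra hne
        apply hne
        have h1 : (3 * m ^ 3 / 50) * (Real.sqrt 2 / 2) ^ 4 * (Real.sqrt 2 / 2) *
            (Real.sqrt 2 / 2) * (Real.sqrt 2 / 2) ≠ 0 := by positivity
        rcases mul_eq_zero.mp key with h2 | h2
        · rcases mul_eq_zero.mp h2 with h3 | h3
          · exact absurd h3 h1
          · exact h3
        · exact absurd h2 (ne_of_gt hGpos)
      rcases mul_eq_zero.mp hfac with h2 | h2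
      · rcases mul_eq_zero.mp h2 with h3 | h3
        · exact Or.inl (eq_of_sq_eq_pos ha hb (by linarith))
        · exact Or.inr (Or.inl (eq_of_sq_eq_pos hb hc (by linarith)))
      · exact Or.inr (Or.inr (eq_of_sq_eq_pos ha hc (by linarith)))
    · exact absurd key (by positivity)
  · intro h θ hθ ψ hψ
    have hfac : (a ^ 2 - b ^ 2) * (b ^ 2 - c ^ 2) * (c ^ 2 - a ^ 2) = 0 := by
      rcases h with h | h | h <;> subst h <;> ring
    rw [hfac, mul_zero, zero_mul, zero_div]
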